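/- arXiv:1612.08531 — 4 statements merged into one kernel-verified Lean document; each statement's English description precedes it below -/
import Mathlib

section
/- Let G be an expandable finite simple graph that has a perfect matching. Then η(G) = τ(Ḡ), the vertex cover number of the complement of G. -/
open SimpleGraph

variable {V : Type*}

/-- `M` is a matching in `G`: a set of pairwise vertex-disjoint edges of `G`. -/
def IsMatchingIn (G : SimpleGraph V) (M : Finset (Sym2 V)) : Prop :=
  (∀ e ∈ M, e ∈ G.edgeSet) ∧
    ∀ e ∈ M, ∀ f ∈ M, e ≠ f → ∀ v : V, v ∈ e → v ∉ f

/-- `M` is a maximal matching in `G`: a matching not properly contained in another matching. -/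
def IsMaximalMatchingIn (G : SimpleGraph V) (M : Finset (Sym2 V)) : Prop :=
  IsMatchingIn G M ∧ ∀ M', IsMatchingIn G M' → M ⊆ M' → M' = M

/-- `M` saturates (covers) the vertex `v`. -/
def Sat (M : Finset (Sym2 V)) (v : V) : Prop := ∃ e ∈ M, v ∈ e

/-- The matching number `ν(G)`. -/
noncomputable def nuNum (G : SimpleGraph V) : ℕ :=
  sSup {n | ∃ M, IsMatchingIn G M ∧ M.card = n}

/-- The minimum maximal matching number `β(G)`. -/
noncomputable def betaNum (G : SimpleGraph V) : ℕ :=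
  sInf {n | ∃ M, IsMaximalMatchingIn G M ∧ M.card = n}

/-- The matching gap `μ(G) = ν(G) - β(G)`. -/
noncomputable def muGap (G : SimpleGraph V) : ℕ := nuNum G - betaNum G

/-- `M` covers the vertex set `S`. -/
def CoversSet (M : Finset (Sym2 V)) (S : Set V) : Prop := ∀ v ∈ S, Sat M v

/-- `S` is an equimatchable set in `G`: all maximal matchings of `G` covering `S`
have the same size. -/
def EquiSet (G : SimpleGraph V) (S : Set V) : Prop :=
  ∀ M M' : Finset (Sym2 V), IsMaximalMatchingIn G M → IsMaximalMatchingIn G M' →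
    CoversSet M S → CoversSet M' S → M.card = M'.card

/-- The equimatchability defect `η(G)`: the minimum size of an equimatchable set in `G`. -/
noncomputable def etaDefect (G : SimpleGraph V) : ℕ :=
  sInf {n | ∃ S : Set V, EquiSet G S ∧ S.ncard = n}

/-- The induced subgraph `G[S]` has a perfect matching: there is a matching of `G`
all of whose edges lie inside `S` and which saturates every vertex of `S`. -/
def HasPMOn (G : SimpleGraph V) (S : Set V) : Prop :=
  ∃ M : Finset (Sym2 V), IsMatchingIn G M ∧ (∀ e ∈ M, ∀ v : V, v ∈ e → v ∈ S) ∧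
    ∀ v ∈ S, Sat M v

/-- `G` is expandable: for every two non-adjacent vertices `u`, `v`,
the graph `G - u - v` has a perfect matching. -/
def Expandable (G : SimpleGraph V) : Prop :=
  ∀ u v : V, u ≠ v → ¬ G.Adj u v → HasPMOn G (Set.univ \ {u, v})

/-- The vertex cover number `τ(H)`. -/
noncomputable def tauNum (H : SimpleGraph V) : ℕ :=
  sInf {n | ∃ C : Set V, (∀ u v : V, H.Adj u v → u ∈ C ∨ v ∈ C) ∧ C.ncard = n}

-- auxiliary lemmas
def eFin [DecidableEq V] (e : Sym2 V) : Finset V :=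
  Sym2.lift ⟨fun a b => {a, b}, fun a b => by simp [Finset.pair_comm]⟩ e

lemma mem_eFin [DecidableEq V] (e : Sym2 V) (v : V) : v ∈ eFin e ↔ v ∈ e := by
  induction e using Sym2.ind with
  | _ a b => simp [eFin, Sym2.mem_iff]

lemma card_eFin [DecidableEq V] (e : Sym2 V) (h : ¬ e.IsDiag) : (eFin e).card = 2 := by
  induction e using Sym2.ind with
  | _ a b =>
    rw [Sym2.mk_isDiag_iff] at h
    simp [eFin, Finset.card_pair h]

lemma sat_card {G : SimpleGraph V} {M : Finset (Sym2 V)} (hM : IsMatchingIn G M)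
    (T : Finset V) (hT : ∀ v, v ∈ T ↔ Sat M v) : T.card = 2 * M.card := by
  classical
  have hTe : T = M.biUnion eFin := by
    ext v
    simp only [Finset.mem_biUnion, hT, Sat, mem_eFin]
  have hdisj : ∀ e ∈ M, ∀ f ∈ M, e ≠ f → Disjoint (eFin e) (eFin f) := by
    intro e he f hf hne
    rw [Finset.disjoint_left]
    intro v hv hvf
    exact hM.2 e he f hf hne v ((mem_eFin e v).1 hv) ((mem_eFin f v).1 hvf)
  rw [hTe, Finset.card_biUnion hdisj,
    Finset.sum_const_nat (m := 2)
      (fun e he => card_eFin e (G.not_isDiag_of_mem_edgeSet (hM.1 e he))), mul_comm]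

lemma maximal_of {G : SimpleGraph V} {M : Finset (Sym2 V)} (hM : IsMatchingIn G M)
    (h : ∀ e ∈ G.edgeSet, e ∉ M → ∃ v, v ∈ e ∧ Sat M v) : IsMaximalMatchingIn G M := by
  refine ⟨hM, fun M' hM' hsub => ?_⟩
  refine Finset.Subset.antisymm ?_ hsub
  intro e he
  by_contra heM
  obtain ⟨v, hve, f, hf, hvf⟩ := h e (hM'.1 e he) heM
  exact hM'.2 e he f (hsub hf) (fun hef => heM (hef ▸ hf)) v hve hvf

lemma extend_contra {G : SimpleGraph V} {M : Finset (Sym2 V)}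
    (hmax : IsMaximalMatchingIn G M) {a b : V} (hab : G.Adj a b)
    (ha : ¬ Sat M a) (hb : ¬ Sat M b) : False := by
  classical
  have heM : s(a, b) ∉ M := fun h => ha ⟨s(a, b), h, Sym2.mem_mk_left a b⟩
  have hmatch : IsMatchingIn G (insert s(a, b) M) := by
    constructor
    · intro f hf
      rcases Finset.mem_insert.1 hf with rfl | hf
      · exact hab
      · exact hmax.1.1 f hf
    · intro f hf g hg hne v hvf hvg
      have key : ∀ h ∈ M, v ∈ s(a, b) → v ∈ h → False := by
        intro h hh hv1 hv2
        rcases Sym2.mem_iff.1 hv1 with rfl | rfl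
        · exact ha ⟨h, hh, hv2⟩
        · exact hb ⟨h, hh, hv2⟩
      rcases Finset.mem_insert.1 hf with rfl | hf
      · rcases Finset.mem_insert.1 hg with rfl | hg
        · exact hne rfl
        · exact key g hg hvf hvg
      · rcases Finset.mem_insert.1 hg with rfl | hg
        · exact key f hf hvg hvf
        · exact hmax.1.2 f hf g hg hne v hvf hvg
  have := hmax.2 _ hmatch (Finset.subset_insert _ M)
  exact heM (this ▸ Finset.mem_insert_self _ M)

theorem stmt_14 {V : Type*} [Fintype V] (G : SimpleGraph V)
    (hExp : Expandable G) (hPM : HasPMOn G (Set.univ : Set V)) :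
    etaDefect G = tauNum Gᶜ := by
  classical
  obtain ⟨M₀, hM₀m, hM₀in, hM₀sat⟩ := hPM
  have hcard0 : Fintype.card V = 2 * M₀.card := by
    rw [← Finset.card_univ]
    exact sat_card hM₀m _ (fun v => ⟨fun _ => hM₀sat v trivial, fun _ => Finset.mem_univ v⟩)
  have hM₀max : IsMaximalMatchingIn G M₀ := by
    refine maximal_of hM₀m ?_
    intro e he hem
    induction e using Sym2.ind with
    | _ a b => exact ⟨a, Sym2.mem_mk_left a b, hM₀sat a trivial⟩
  have hsets : {n | ∃ S : Set V, EquiSet G S ∧ S.ncard = n}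
      = {n | ∃ C : Set V, (∀ u v : V, Gᶜ.Adj u v → u ∈ C ∨ v ∈ C) ∧ C.ncard = n} := by
    ext n
    constructor
    · rintro ⟨S, hS, rfl⟩
      refine ⟨S, ?_, rfl⟩
      intro u v huv
      by_contra hc
      push_neg at hc
      obtain ⟨huS, hvS⟩ := hc
      rw [compl_adj] at huv
      obtain ⟨hne, hnadj⟩ := huv
      obtain ⟨M₁, hM₁m, hM₁in, hM₁sat⟩ := hExp u v hne hnadj
      have hmemS : ∀ w : V, w ≠ u → w ≠ v → w ∈ (Set.univ \ {u, v} : Set V) := by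
        intro w h1 h2
        exact ⟨trivial, by simp [h1, h2]⟩
      have hT : ∀ w, w ∈ (Finset.univ \ {u, v} : Finset V) ↔ Sat M₁ w := by
        intro w
        constructor
        · intro hw
          simp only [Finset.mem_sdiff, Finset.mem_univ, Finset.mem_insert,
            Finset.mem_singleton, true_and] at hw
          push_neg at hw
          exact hM₁sat w (hmemS w hw.1 hw.2)
        · rintro ⟨e, he, hwe⟩
          have := hM₁in e he w hwe
          simp only [Set.mem_diff, Set.mem_insert_iff, Set.mem_singleton_iff] at this
          push_neg at this
          simp [this.2.1, this.2.2]
      have hcard1 : (Finset.univ \ {u, v} : Finset V).card = 2 * M₁.card :=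
        sat_card hM₁m _ hT
      have hcards : (Finset.univ \ {u, v} : Finset V).card = Fintype.card V - 2 := by
        rw [Finset.card_sdiff_of_subset (Finset.subset_univ _), Finset.card_pair hne,
          Finset.card_univ]
      have hge : 2 ≤ Fintype.card V := by
        have : ({u, v} : Finset V).card ≤ Fintype.card V := by
          rw [← Finset.card_univ]; exact Finset.card_le_card (Finset.subset_univ _)
        rwa [Finset.card_pair hne] at this
      have hM₁max : IsMaximalMatchingIn G M₁ := by
        refine maximal_of hM₁m ?_
        intro e he hem
        induction e using Sym2.ind with
        | _ a b =>
          rw [SimpleGraph.mem_edgeSet] at he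
          by_cases hau : a = u ∨ a = v
          · by_cases hbu : b = u ∨ b = v
            · exfalso
              rcases hau with rfl | rfl <;> rcases hbu with rfl | rfl
              · exact he.ne rfl
              · exact hnadj he
              · exact hnadj he.symm
              · exact he.ne rfl
            · push_neg at hbu
              exact ⟨b, Sym2.mem_mk_right a b, hM₁sat b (hmemS b hbu.1 hbu.2)⟩
          · push_neg at hau
            exact ⟨a, Sym2.mem_mk_left a b, hM₁sat a (hmemS a hau.1 hau.2)⟩
      have hcov1 : CoversSet M₁ S := by
        intro x hx
        refine hM₁sat x (hmemS x ?_ ?_)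
        · rintro rfl; exact huS hx
        · rintro rfl; exact hvS hx
      have hcov0 : CoversSet M₀ S := fun x _ => hM₀sat x trivial
      have := hS M₁ M₀ hM₁max hM₀max hcov1 hcov0
      omega
    · rintro ⟨C, hC, rfl⟩
      refine ⟨C, ?_, rfl⟩
      intro M M' hMmax hM'max hMcov hM'cov
      have key : ∀ N : Finset (Sym2 V), IsMaximalMatchingIn G N → CoversSet N C →
          2 * N.card = Fintype.card V := by
        intro N hN hNc
        set U := Finset.univ.filter (fun v => ¬ Sat N v) with hUdef
        have hU1 : U.card ≤ 1 := by
          rw [Finset.card_le_one]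
          intro a ha b hb
          by_contra hab
          simp only [hUdef, Finset.mem_filter, Finset.mem_univ, true_and] at ha hb
          have haC : a ∉ C := fun h => ha (hNc a h)
          have hbC : b ∉ C := fun h => hb (hNc b h)
          have hadj : G.Adj a b := by
            by_contra h
            rcases hC a b ((compl_adj G a b).2 ⟨hab, h⟩) with h' | h'
            · exact haC h'
            · exact hbC h'
          exact extend_contra hN hadj ha hb
        have hSc : (Finset.univ.filter (fun v => Sat N v)).card = 2 * N.card :=
          sat_card hN.1 _ (by simp)
        have hsplit := Finset.card_filter_add_card_filter_not
          (s := (Finset.univ : Finset V)) (p := fun v => Sat N v)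
        rw [Finset.card_univ] at hsplit
        have hUcard : (Finset.univ.filter (fun v => ¬ Sat N v)).card = U.card := rfl
        omega
      have h1 := key M hMmax hMcov
      have h2 := key M' hM'max hM'cov
      omega
  unfold etaDefect tauNum
  rw [hsets]
end

section
/- Let G be an expandable finite simple graph that has a perfect matching. Then η(G) = |V(G)| − ω(G), where ω(G) is the clique number of G. -/
open SimpleGraph

variable {V : Type*}

/-- The clique number `ω(G)`. -/
noncomputable def omegaNum (G : SimpleGraph V) : ℕ :=
  sSup {n | ∃ S : Set V, G.IsClique S ∧ S.ncard = n}

section Helpers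

variable {V : Type*}

/-- Number of saturated vertices of a matching equals twice its size. -/
lemma sat_ncard [Fintype V] (G : SimpleGraph V) (M : Finset (Sym2 V))
    (hM : IsMatchingIn G M) : Set.ncard {v | Sat M v} = 2 * M.card := by
  classical
  have key : {v | Sat M v}.toFinset
      = M.biUnion (fun e => Finset.univ.filter (fun v => v ∈ e)) := by
    ext v
    exact Set.mem_toFinset.trans (by simp [Sat])
  rw [Set.ncard_eq_toFinset_card', key, Finset.card_biUnion]
  · rw [Finset.sum_congr rfl (fun e he => ?_), Finset.sum_const, smul_eq_mul, mul_comm]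
    have hd : ¬ e.IsDiag := G.not_isDiag_of_mem_edgeSet (hM.1 e he)
    induction e with
    | _ a b =>
      rw [Sym2.mk_isDiag_iff] at hd
      have : Finset.univ.filter (fun v => v ∈ s(a, b)) = {a, b} := by
        ext v; simp [Sym2.mem_iff]
      rw [this, Finset.card_insert_of_notMem (by simp [hd]), Finset.card_singleton]
  · intro e he f hf hef
    rw [Function.onFun, Finset.disjoint_left]
    intro v hv hvf
    simp only [Finset.mem_filter] at hv hvf
    exact hM.2 e he f hf hef v hv.2 hvf.2

/-- A matching whose unsaturated vertices are pairwise non-adjacent is maximal. -/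
lemma maximal_of_unsat [Fintype V] (G : SimpleGraph V) (M : Finset (Sym2 V))
    (hM : IsMatchingIn G M)
    (h : ∀ a b : V, ¬ Sat M a → ¬ Sat M b → ¬ G.Adj a b) :
    IsMaximalMatchingIn G M := by
  refine ⟨hM, fun M' hM' hsub => ?_⟩
  refine Finset.Subset.antisymm ?_ hsub
  intro e heM'
  by_contra heM
  have hd : e ∈ G.edgeSet := hM'.1 e heM'
  induction e with
  | _ a b =>
    have hab : G.Adj a b := hd
    have hsa : ¬ Sat M a := by
      rintro ⟨f, hf, haf⟩
      exact hM'.2 s(a, b) heM' f (hsub hf) (fun hh => heM (hh ▸ hf)) a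
        (by simp) haf
    have hsb : ¬ Sat M b := by
      rintro ⟨f, hf, hbf⟩
      exact hM'.2 s(a, b) heM' f (hsub hf) (fun hh => heM (hh ▸ hf)) b
        (by simp) hbf
    exact h a b hsa hsb hab

end Helpers

theorem stmt_15 {V : Type*} [Fintype V] (G : SimpleGraph V)
    (hExp : Expandable G) (hPM : HasPMOn G (Set.univ : Set V)) :
    etaDefect G = Fintype.card V - omegaNum G := by
  classical
  set N := Fintype.card V with hN
  obtain ⟨M₀, hM₀, -, hsat₀⟩ := hPM
  have hsatset₀ : {v | Sat M₀ v} = Set.univ := by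
    ext v; simp [hsat₀ v (Set.mem_univ v)]
  have hcard₀ : 2 * M₀.card = N := by
    rw [← sat_ncard G M₀ hM₀, hsatset₀, Set.ncard_univ, Nat.card_eq_fintype_card]
  -- maximum clique
  have h0mem : (0 : ℕ) ∈ {n | ∃ S : Set V, G.IsClique S ∧ S.ncard = n} :=
    ⟨∅, G.isClique_empty, by simp⟩
  have hbdd : BddAbove {n | ∃ S : Set V, G.IsClique S ∧ S.ncard = n} := by
    refine ⟨N, fun n hn => ?_⟩
    obtain ⟨S, -, rfl⟩ := hn
    calc S.ncard ≤ (Set.univ : Set V).ncard :=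
          Set.ncard_le_ncard (Set.subset_univ S) (Set.toFinite _)
      _ = N := by rw [Set.ncard_univ, Nat.card_eq_fintype_card]
  have homega : omegaNum G ∈ {n | ∃ S : Set V, G.IsClique S ∧ S.ncard = n} :=
    Nat.sSup_mem ⟨0, h0mem⟩ hbdd
  obtain ⟨K, hK, hKcard⟩ := homega
  have hKle : omegaNum G ≤ N := by
    rw [← hKcard]
    calc K.ncard ≤ (Set.univ : Set V).ncard :=
          Set.ncard_le_ncard (Set.subset_univ K) (Set.toFinite _)
      _ = N := by rw [Set.ncard_univ, Nat.card_eq_fintype_card]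
  -- the perfect matching is a maximal matching
  have hM₀max : IsMaximalMatchingIn G M₀ :=
    maximal_of_unsat G M₀ hM₀ (fun a _ ha _ => absurd (hsat₀ a (Set.mem_univ a)) ha)
  -- Lower bound: every equimatchable set has size ≥ N - ω
  have hlb : ∀ n ∈ {n | ∃ S : Set V, EquiSet G S ∧ S.ncard = n}, N - omegaNum G ≤ n := by
    rintro n ⟨S, hS, rfl⟩
    have hclique : G.IsClique (Set.univ \ S) := by
      rw [SimpleGraph.isClique_iff]
      intro u hu v hv huv
      by_contra hadj
      obtain ⟨M₂, hM₂, hM₂in, hM₂sat⟩ := hExp u v huv hadj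
      -- M₂ is a maximal matching of G
      have hunsat : ∀ w : V, ¬ Sat M₂ w → w = u ∨ w = v := by
        intro w hw
        by_contra hc
        push_neg at hc
        exact hw (hM₂sat w ⟨Set.mem_univ w, by simp [hc.1, hc.2]⟩)
      have hM₂max : IsMaximalMatchingIn G M₂ := by
        refine maximal_of_unsat G M₂ hM₂ (fun a b ha hb hab => ?_)
        rcases hunsat a ha with rfl | rfl <;> rcases hunsat b hb with rfl | rfl <;>
          first | exact hadj hab | exact hadj hab.symm | exact G.irrefl hab
      -- M₂ covers S and has N - 2 saturated vertices
      have hcovS : CoversSet M₂ S := by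
        intro w hw
        refine hM₂sat w ⟨Set.mem_univ w, ?_⟩
        intro hmem
        rcases hmem with rfl | rfl
        · exact hu.2 hw
        · exact hv.2 hw
      have hcov₀ : CoversSet M₀ S := fun w _ => hsat₀ w (Set.mem_univ w)
      have heq := hS M₀ M₂ hM₀max hM₂max hcov₀ hcovS
      have hsatset₂ : {w | Sat M₂ w} = Set.univ \ {u, v} := by
        ext w
        constructor
        · rintro ⟨e, he, hwe⟩
          exact hM₂in e he w hwe
        · exact fun hw => hM₂sat w hw
      have hcard₂ : 2 * M₂.card = N - 2 := by
        rw [← sat_ncard G M₂ hM₂, hsatset₂,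
          Set.ncard_diff (Set.subset_univ _) (Set.toFinite _), Set.ncard_univ,
          Nat.card_eq_fintype_card, Set.ncard_pair huv]
      have hN2 : 2 ≤ N := by
        have : ({u, v} : Set V).ncard ≤ N := by
          calc ({u, v} : Set V).ncard ≤ (Set.univ : Set V).ncard :=
                Set.ncard_le_ncard (Set.subset_univ _) (Set.toFinite _)
            _ = N := by rw [Set.ncard_univ, Nat.card_eq_fintype_card]
        rwa [Set.ncard_pair huv] at this
      omega
    have hmem : (Set.univ \ S).ncard ∈ {n | ∃ T : Set V, G.IsClique T ∧ T.ncard = n} :=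
      ⟨_, hclique, rfl⟩
    have hle : (Set.univ \ S).ncard ≤ omegaNum G := le_csSup hbdd hmem
    have hsplit : S.ncard + (Set.univ \ S).ncard = N := by
      rw [← Set.ncard_union_eq (disjoint_sdiff_self_right) (Set.toFinite _) (Set.toFinite _)]
      rw [Set.union_diff_cancel (Set.subset_univ S), Set.ncard_univ,
        Nat.card_eq_fintype_card]
    omega
  -- Upper bound: the complement of a maximum clique is equimatchable
  have hub : (N - omegaNum G) ∈ {n | ∃ S : Set V, EquiSet G S ∧ S.ncard = n} := by
    refine ⟨Set.univ \ K, ?_, ?_⟩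
    · -- EquiSet
      have key : ∀ M : Finset (Sym2 V), IsMaximalMatchingIn G M →
          CoversSet M (Set.univ \ K) → 2 * M.card = N := by
        intro M hMmax hMcov
        have hMm := hMmax.1
        -- unsaturated vertices form a subsingleton
        have hsub : ({w | ¬ Sat M w} : Set V).Subsingleton := by
          intro a ha b hb
          by_contra hab
          have haK : a ∈ K := by
            by_contra h'
            exact ha (hMcov a ⟨Set.mem_univ a, h'⟩)
          have hbK : b ∈ K := by
            by_contra h'
            exact hb (hMcov b ⟨Set.mem_univ b, h'⟩)
          have hadj : G.Adj a b := hK haK hbK hab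
          -- insert the edge s(a,b) to contradict maximality
          have hnotin : s(a, b) ∉ M := by
            intro hmem
            exact ha ⟨s(a, b), hmem, by simp⟩
          have hM' : IsMatchingIn G (insert s(a, b) M) := by
            constructor
            · intro e he
              rcases Finset.mem_insert.mp he with rfl | heM
              · exact hadj
              · exact hMm.1 e heM
            · intro e he f hf hef w hwe hwf
              rcases Finset.mem_insert.mp he with rfl | heM <;>
                rcases Finset.mem_insert.mp hf with rfl | hfM
              · exact hef rfl
              · rcases Sym2.mem_iff.mp hwe with rfl | rfl
                · exact ha ⟨f, hfM, hwf⟩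
                · exact hb ⟨f, hfM, hwf⟩
              · rcases Sym2.mem_iff.mp hwf with rfl | rfl
                · exact ha ⟨e, heM, hwe⟩
                · exact hb ⟨e, heM, hwe⟩
              · exact hMm.2 e heM f hfM hef w hwe hwf
          have := hMmax.2 _ hM' (Finset.subset_insert _ _)
          exact hnotin (this ▸ Finset.mem_insert_self _ _)
        have hunsatcard : ({w | ¬ Sat M w} : Set V).ncard ≤ 1 :=
          hsub.eq_empty_or_singleton.elim (fun h => by simp [h])
            (fun ⟨x, h⟩ => by simp [h])
        have hsatcard : ({w | Sat M w} : Set V).ncard = 2 * M.card :=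
          sat_ncard G M hMm
        have hcompl : ({w | Sat M w} : Set V).ncard
            + ({w | Sat M w} : Set V)ᶜ.ncard = N := by
          rw [Set.ncard_add_ncard_compl, hN, Nat.card_eq_fintype_card]
        have : ({w | Sat M w} : Set V)ᶜ = {w | ¬ Sat M w} := by
          ext w; simp
        rw [this] at hcompl
        omega
      intro M M' hMmax hM'max hMcov hM'cov
      have h1 := key M hMmax hMcov
      have h2 := key M' hM'max hM'cov
      omega
    · rw [Set.ncard_diff (Set.subset_univ _) (Set.toFinite _), Set.ncard_univ,
        Nat.card_eq_fintype_card, hKcard]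
  exact le_antisymm (Nat.sInf_le hub) (le_csInf ⟨_, hub⟩ hlb)
end

section
/- Every finite simple graph G with at least one edge satisfies η(G) ≤ 2ν(G) − 2. -/
open SimpleGraph

variable {V : Type*}

section Aux

variable {V : Type*}

private lemma sym2_rep (f : Sym2 V) : ∃ a b, f = s(a, b) := by
  induction f using Sym2.ind with
  | _ a b => exact ⟨a, b, rfl⟩

variable [Fintype V] [DecidableEq V]

/-- vertex set of a `Sym2`. -/
private def toF (f : Sym2 V) : Finset V := Finset.univ.filter (· ∈ f)

private lemma mem_toF {f : Sym2 V} {v : V} : v ∈ toF f ↔ v ∈ f := by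
  simp [toF]

private def satF (M : Finset (Sym2 V)) : Finset V := M.biUnion toF

private lemma mem_satF {M : Finset (Sym2 V)} {v : V} : v ∈ satF M ↔ Sat M v := by
  simp [satF, Sat, mem_toF]

private lemma card_satF (G : SimpleGraph V) {M : Finset (Sym2 V)}
    (hM : IsMatchingIn G M) : (satF M).card = 2 * M.card := by
  rw [satF, Finset.card_biUnion]
  · rw [Finset.sum_congr rfl (fun f hf => ?_), Finset.sum_const, smul_eq_mul, mul_comm]
    obtain ⟨a, b, rfl⟩ := sym2_rep f
    have hab : a ≠ b := (G.mem_edgeSet.mp (hM.1 _ hf)).ne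
    have : toF (s(a, b)) = {a, b} := by
      ext v; simp [mem_toF, Sym2.mem_iff]
    rw [this, Finset.card_insert_of_notMem (by simpa using hab), Finset.card_singleton]
  · intro e he f hf hef
    rw [Function.onFun, Finset.disjoint_left]
    intro v hv hvf
    exact hM.2 e he f hf hef v (mem_toF.mp hv) (mem_toF.mp hvf)

private lemma card_le_nuNum (G : SimpleGraph V) {M : Finset (Sym2 V)}
    (hM : IsMatchingIn G M) : M.card ≤ nuNum G :=
  le_csSup ⟨Fintype.card (Sym2 V), fun n hn => by
    obtain ⟨M', _, rfl⟩ := hn; exact Finset.card_le_univ M'⟩ ⟨M, hM, rfl⟩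

private lemma exists_max (G : SimpleGraph V) :
    ∃ M, IsMatchingIn G M ∧ M.card = nuNum G := by
  have h := Nat.sSup_mem (s := {n | ∃ M, IsMatchingIn G M ∧ M.card = n})
    ⟨0, ∅, ⟨by simp, by simp⟩, rfl⟩
    ⟨Fintype.card (Sym2 V), fun n hn => by
      obtain ⟨M', _, rfl⟩ := hn; exact Finset.card_le_univ M'⟩
  exact h

end Aux

theorem stmt_17 {V : Type*} [Fintype V] (G : SimpleGraph V)
    (hEdge : ∃ u v : V, G.Adj u v) :
    etaDefect G ≤ 2 * nuNum G - 2 := by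
  classical
  obtain ⟨u0, v0, huv⟩ := hEdge
  -- ν ≥ 1
  have hnu1 : 1 ≤ nuNum G := by
    have : IsMatchingIn G {s(u0, v0)} := by
      constructor
      · intro e he; rw [Finset.mem_singleton] at he; subst he; exact G.mem_edgeSet.mpr huv
      · intro e he f hf hef
        rw [Finset.mem_singleton] at he hf
        exact absurd (he.trans hf.symm) hef
    simpa using card_le_nuNum G this
  obtain ⟨Mx, hMx, hMxcard⟩ := exists_max G
  have hMxne : Mx.Nonempty := Finset.card_pos.mp (by omega)
  obtain ⟨e0, he0⟩ := hMxne
  obtain ⟨a, b, hab⟩ := sym2_rep e0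
  set F : Finset (Sym2 V) := Mx.erase e0 with hFdef
  have hFsub : F ⊆ Mx := Finset.erase_subset _ _
  have hFmatch : IsMatchingIn G F :=
    ⟨fun e he => hMx.1 e (hFsub he),
     fun e he f hf hef v hv => hMx.2 e (hFsub he) f (hFsub hf) hef v hv⟩
  have hFcard : F.card = nuNum G - 1 := by
    rw [hFdef, Finset.card_erase_of_mem he0, hMxcard]
  set S : Set V := ↑(satF F) with hSdef
  -- a, b are not saturated by F
  have haF : a ∉ satF F := by
    intro h
    obtain ⟨f, hf, haf⟩ := mem_satF.mp h
    have hfne : f ≠ e0 := Finset.ne_of_mem_erase hf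
    exact hMx.2 f (hFsub hf) e0 he0 hfne a haf (by rw [hab]; exact Sym2.mem_mk_left a b)
  have hbF : b ∉ satF F := by
    intro h
    obtain ⟨f, hf, hbf⟩ := mem_satF.mp h
    have hfne : f ≠ e0 := Finset.ne_of_mem_erase hf
    exact hMx.2 f (hFsub hf) e0 he0 hfne b hbf (by rw [hab]; exact Sym2.mem_mk_right a b)
  -- every maximal matching covering S has size ν
  have key : ∀ M', IsMaximalMatchingIn G M' → CoversSet M' S → M'.card = nuNum G := by
    intro M' hM' hcov
    have hle : M'.card ≤ nuNum G := card_le_nuNum G hM'.1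
    by_contra hne
    have hlt : M'.card ≤ nuNum G - 1 := by omega
    have hsub : satF F ⊆ satF M' := by
      intro v hv
      exact mem_satF.mpr (hcov v (by exact_mod_cast hv))
    have hcards : (satF M').card ≤ (satF F).card := by
      rw [card_satF G hM'.1, card_satF G hFmatch, hFcard]
      omega
    have heq : satF F = satF M' := Finset.eq_of_subset_of_card_le hsub hcards
    have haM' : a ∉ satF M' := heq ▸ haF
    have hbM' : b ∉ satF M' := heq ▸ hbF
    have he0M' : e0 ∉ M' := by
      intro h
      exact haM' (mem_satF.mpr ⟨e0, h, by rw [hab]; exact Sym2.mem_mk_left a b⟩)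
    -- insert e0 into M' to get a bigger matching
    have hins : IsMatchingIn G (insert e0 M') := by
      constructor
      · intro e he
        rcases Finset.mem_insert.mp he with h | h
        · subst h; exact hMx.1 e he0
        · exact hM'.1.1 e h
      · intro e he f hf hef v hv
        rcases Finset.mem_insert.mp he with h1 | h1 <;>
          rcases Finset.mem_insert.mp hf with h2 | h2
        · exact absurd (h1.trans h2.symm) hef
        · subst h1
          intro hvf
          have : v = a ∨ v = b := Sym2.mem_iff.mp (hab ▸ hv)
          rcases this with rfl | rfl
          · exact haM' (mem_satF.mpr ⟨f, h2, hvf⟩)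
          · exact hbM' (mem_satF.mpr ⟨f, h2, hvf⟩)
        · subst h2
          intro hvf
          have : v = a ∨ v = b := Sym2.mem_iff.mp (hab ▸ hvf)
          rcases this with rfl | rfl
          · exact haM' (mem_satF.mpr ⟨e, h1, hv⟩)
          · exact hbM' (mem_satF.mpr ⟨e, h1, hv⟩)
        · exact hM'.1.2 e h1 f h2 hef v hv
    have := hM'.2 (insert e0 M') hins (Finset.subset_insert _ _)
    exact he0M' (this ▸ Finset.mem_insert_self e0 M')
  -- S is equimatchable of size 2ν - 2
  have hequi : EquiSet G S := by
    intro M1 M2 h1 h2 c1 c2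
    rw [key M1 h1 c1, key M2 h2 c2]
  have hScard : S.ncard = 2 * nuNum G - 2 := by
    rw [hSdef, Set.ncard_coe_finset, card_satF G hFmatch, hFcard]
    omega
  exact Nat.sInf_le ⟨S, hequi, hScard⟩
end

section
/- For every positive integer k, the graph G_k = kP_4, the disjoint union of k paths on four vertices, satisfies ν(G_k) = 2k, β(G_k) = k, μ(G_k) = k, and η(G_k) = k; in particular, the bound μ(G) ≤ η(G) is attained with equality by graphs with arbitrarily large values of both parameters. -/
open SimpleGraph

variable {V : Type*}

/-- `kP₄`: the disjoint union of `k` copies of the path on four vertices. -/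
def kP4 (k : ℕ) : SimpleGraph (Fin k × Fin 4) where
  Adj x y := x.1 = y.1 ∧ (SimpleGraph.pathGraph 4).Adj x.2 y.2
  symm := by
    refine ⟨?_⟩
    rintro ⟨i, a⟩ ⟨j, b⟩ ⟨h1, h2⟩
    exact ⟨h1.symm, h2.symm⟩
  loopless := by
    refine ⟨?_⟩
    rintro ⟨i, a⟩ ⟨-, h⟩
    exact h.ne rfl


section KP4Helpers
open Finset
variable {k : ℕ}

lemma path4_cases {a b : Fin 4} (h : (pathGraph 4).Adj a b) :
    (a = 0 ∧ b = 1) ∨ (a = 1 ∧ b = 0) ∨ (a = 1 ∧ b = 2) ∨ (a = 2 ∧ b = 1) ∨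
    (a = 2 ∧ b = 3) ∨ (a = 3 ∧ b = 2) := by
  rw [pathGraph_adj] at h
  have ha := a.isLt; have hb := b.isLt
  simp only [Fin.ext_iff]
  omega

lemma kadj {i j : Fin k} {a b : Fin 4} (hij : i = j) (h : a.val + 1 = b.val ∨ b.val + 1 = a.val) :
    (kP4 k).Adj (i,a) (j,b) := ⟨hij, pathGraph_adj.mpr h⟩

lemma comp_eq {e : Sym2 (Fin k × Fin 4)} (he : e ∈ (kP4 k).edgeSet) :
    ∀ x ∈ e, ∀ y ∈ e, x.1 = y.1 := by
  induction e using Sym2.ind with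
  | _ u v =>
    rw [mem_edgeSet] at he
    intro x hx y hy
    rw [Sym2.mem_iff] at hx hy
    have h1 : u.1 = v.1 := he.1
    rcases hx with rfl | rfl <;> rcases hy with rfl | rfl <;> simp [h1]

lemma edge_struct {e : Sym2 (Fin k × Fin 4)} (he : e ∈ (kP4 k).edgeSet)
    {i : Fin k} {c : Fin 4} (h : (i,c) ∈ e) :
    ∃ d, (pathGraph 4).Adj c d ∧ e = s((i,c),(i,d)) := by
  induction e using Sym2.ind with
  | _ u v =>
    rw [mem_edgeSet] at he
    rw [Sym2.mem_iff] at h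
    obtain ⟨j, d⟩ := u
    obtain ⟨j', d'⟩ := v
    obtain ⟨h1, h2⟩ := he
    simp only [Prod.mk.injEq] at h h1
    rcases h with ⟨rfl, rfl⟩ | ⟨rfl, rfl⟩
    · subst h1; exact ⟨d', h2, rfl⟩
    · subst h1; exact ⟨d, h2.symm, Sym2.eq_swap⟩


def f01 (i : Fin k) : Sym2 (Fin k × Fin 4) := s((i,0),(i,1))
def f12 (i : Fin k) : Sym2 (Fin k × Fin 4) := s((i,1),(i,2))
def f23 (i : Fin k) : Sym2 (Fin k × Fin 4) := s((i,2),(i,3))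

def Mfull (k : ℕ) : Finset (Sym2 (Fin k × Fin 4)) := (univ.image f01) ∪ (univ.image f23)
def Mmid (k : ℕ) : Finset (Sym2 (Fin k × Fin 4)) := univ.image f12
def Mmix (i : Fin k) : Finset (Sym2 (Fin k × Fin 4)) :=
  ((univ.erase i).image f01 ∪ (univ.erase i).image f23) ∪ {f12 i}

lemma mem_f01 {v : Fin k × Fin 4} {i : Fin k} : v ∈ f01 i ↔ v = (i,0) ∨ v = (i,1) := Sym2.mem_iff
lemma mem_f12 {v : Fin k × Fin 4} {i : Fin k} : v ∈ f12 i ↔ v = (i,1) ∨ v = (i,2) := Sym2.mem_iff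
lemma mem_f23 {v : Fin k × Fin 4} {i : Fin k} : v ∈ f23 i ↔ v = (i,2) ∨ v = (i,3) := Sym2.mem_iff

lemma f01_inj : Function.Injective (f01 (k := k)) := by
  intro i j h
  simp [f01, Sym2.eq_iff, Prod.ext_iff] at h
  tauto

lemma f12_inj : Function.Injective (f12 (k := k)) := by
  intro i j h
  simp [f12, Sym2.eq_iff, Prod.ext_iff] at h
  tauto

lemma f23_inj : Function.Injective (f23 (k := k)) := by
  intro i j h
  simp [f23, Sym2.eq_iff, Prod.ext_iff] at h
  tauto

lemma f01_ne_f23 {i j : Fin k} : f01 i ≠ f23 j := by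
  simp [f01, f23, Sym2.eq_iff, Prod.ext_iff]

lemma f12_ne_f01 {i j : Fin k} : f12 i ≠ f01 j := by
  simp [f01, f12, Sym2.eq_iff, Prod.ext_iff]
lemma f12_ne_f23 {i j : Fin k} : f12 i ≠ f23 j := by
  simp [f12, f23, Sym2.eq_iff, Prod.ext_iff]

lemma mem_Mfull {e : Sym2 (Fin k × Fin 4)} :
    e ∈ Mfull k ↔ ∃ i, e = f01 i ∨ e = f23 i := by
  simp [Mfull, eq_comm, or_and_right, exists_or]

lemma mem_Mmid {e : Sym2 (Fin k × Fin 4)} :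
    e ∈ Mmid k ↔ ∃ i, e = f12 i := by
  simp [Mmid, eq_comm]

lemma mem_Mmix {i : Fin k} {e : Sym2 (Fin k × Fin 4)} :
    e ∈ Mmix i ↔ (∃ j, j ≠ i ∧ (e = f01 j ∨ e = f23 j)) ∨ e = f12 i := by
  simp only [Mmix, mem_union, mem_image, mem_erase, mem_singleton, mem_univ, and_true]
  constructor
  · rintro ((⟨j,hj,rfl⟩|⟨j,hj,rfl⟩)|rfl)
    exacts [Or.inl ⟨j,hj,Or.inl rfl⟩, Or.inl ⟨j,hj,Or.inr rfl⟩, Or.inr rfl]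
  · rintro (⟨j,hj,rfl|rfl⟩|rfl)
    exacts [Or.inl (Or.inl ⟨j,hj,rfl⟩), Or.inl (Or.inr ⟨j,hj,rfl⟩), Or.inr rfl]

lemma matching_Mfull : IsMatchingIn (kP4 k) (Mfull k) := by
  constructor
  · intro e he
    rcases mem_Mfull.mp he with ⟨i, rfl | rfl⟩
    · exact kadj rfl (by omega)
    · exact kadj rfl (by omega)
  · intro e he f hf hne v hv hv'
    rcases mem_Mfull.mp he with ⟨i, rfl | rfl⟩ <;>
      rcases mem_Mfull.mp hf with ⟨j, rfl | rfl⟩ <;>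
      [skip; skip; skip; skip] <;>
      simp only [mem_f01, mem_f23] at hv hv' <;>
      rcases hv with rfl | rfl <;>
      rcases hv' with h | h <;>
      simp_all [f01, f23, Sym2.eq_iff, Prod.ext_iff]

lemma matching_Mmid : IsMatchingIn (kP4 k) (Mmid k) := by
  constructor
  · intro e he
    obtain ⟨i, rfl⟩ := mem_Mmid.mp he
    exact kadj rfl (by omega)
  · intro e he f hf hne v hv hv'
    obtain ⟨i, rfl⟩ := mem_Mmid.mp he
    obtain ⟨j, rfl⟩ := mem_Mmid.mp hf
    simp only [mem_f12] at hv hv'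
    rcases hv with rfl | rfl <;> rcases hv' with h | h <;>
      simp_all [f12, Sym2.eq_iff, Prod.ext_iff]

lemma matching_Mmix {i : Fin k} : IsMatchingIn (kP4 k) (Mmix i) := by
  constructor
  · intro e he
    rcases mem_Mmix.mp he with ⟨j, hj, rfl | rfl⟩ | rfl
    · exact kadj rfl (by omega)
    · exact kadj rfl (by omega)
    · exact kadj rfl (by omega)
  · intro e he f hf hne v hv hv'
    rcases mem_Mmix.mp he with ⟨j, hj, rfl | rfl⟩ | rfl <;>
      rcases mem_Mmix.mp hf with ⟨j', hj', rfl | rfl⟩ | rfl <;>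
      simp only [mem_f01, mem_f12, mem_f23] at hv hv' <;>
      rcases hv with rfl | rfl <;>
      rcases hv' with h | h <;>
      simp_all [f01, f12, f23, Sym2.eq_iff, Prod.ext_iff]

lemma maximal_of_dominating {M : Finset (Sym2 (Fin k × Fin 4))}
    (hM : IsMatchingIn (kP4 k) M)
    (h : ∀ e ∈ (kP4 k).edgeSet, ∃ f ∈ M, ∃ v, v ∈ f ∧ v ∈ e) :
    IsMaximalMatchingIn (kP4 k) M := by
  refine ⟨hM, fun M' hM' hsub => Finset.Subset.antisymm ?_ hsub⟩
  intro e he'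
  by_contra heM
  obtain ⟨f, hf, v, hvf, hve⟩ := h e (hM'.1 e he')
  have hne : f ≠ e := fun hfe => heM (hfe ▸ hf)
  exact hM'.2 f (hsub hf) e he' hne v hvf hve

lemma edge_decomp {e : Sym2 (Fin k × Fin 4)} (he : e ∈ (kP4 k).edgeSet) :
    ∃ (j : Fin k) (a b : Fin 4), (pathGraph 4).Adj a b ∧ e = s((j,a),(j,b)) := by
  induction e using Sym2.ind with
  | _ u v =>
    obtain ⟨j, a⟩ := u
    obtain ⟨j', b⟩ := v
    obtain ⟨h1, h2⟩ := (SimpleGraph.mem_edgeSet _).mp he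
    cases h1
    exact ⟨j, a, b, h2, rfl⟩

lemma maximal_Mmid : IsMaximalMatchingIn (kP4 k) (Mmid k) := by
  refine maximal_of_dominating matching_Mmid (fun e he => ?_)
  obtain ⟨j, a, b, hab, rfl⟩ := edge_decomp he
  have hm : f12 j ∈ Mmid k := mem_Mmid.mpr ⟨j, rfl⟩
  rcases path4_cases hab with ⟨rfl,rfl⟩|⟨rfl,rfl⟩|⟨rfl,rfl⟩|⟨rfl,rfl⟩|⟨rfl,rfl⟩|⟨rfl,rfl⟩
  exacts [⟨_, hm, (j,1), by simp [mem_f12], by simp⟩,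
    ⟨_, hm, (j,1), by simp [mem_f12], by simp⟩,
    ⟨_, hm, (j,1), by simp [mem_f12], by simp⟩,
    ⟨_, hm, (j,1), by simp [mem_f12], by simp⟩,
    ⟨_, hm, (j,2), by simp [mem_f12], by simp⟩,
    ⟨_, hm, (j,2), by simp [mem_f12], by simp⟩]

lemma maximal_Mfull : IsMaximalMatchingIn (kP4 k) (Mfull k) := by
  refine maximal_of_dominating matching_Mfull (fun e he => ?_)
  obtain ⟨j, a, b, hab, rfl⟩ := edge_decomp he
  have h1 : f01 j ∈ Mfull k := mem_Mfull.mpr ⟨j, Or.inl rfl⟩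
  have h2 : f23 j ∈ Mfull k := mem_Mfull.mpr ⟨j, Or.inr rfl⟩
  rcases path4_cases hab with ⟨rfl,rfl⟩|⟨rfl,rfl⟩|⟨rfl,rfl⟩|⟨rfl,rfl⟩|⟨rfl,rfl⟩|⟨rfl,rfl⟩
  exacts [⟨_, h1, (j,0), by simp [mem_f01], by simp⟩,
    ⟨_, h1, (j,0), by simp [mem_f01], by simp⟩,
    ⟨_, h1, (j,1), by simp [mem_f01], by simp⟩,
    ⟨_, h1, (j,1), by simp [mem_f01], by simp⟩,
    ⟨_, h2, (j,2), by simp [mem_f23], by simp⟩,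
    ⟨_, h2, (j,2), by simp [mem_f23], by simp⟩]

lemma maximal_Mmix {i : Fin k} : IsMaximalMatchingIn (kP4 k) (Mmix i) := by
  refine maximal_of_dominating matching_Mmix (fun e he => ?_)
  obtain ⟨j, a, b, hab, rfl⟩ := edge_decomp he
  by_cases hji : j = i
  · subst hji
    have hm : f12 j ∈ Mmix j := mem_Mmix.mpr (Or.inr rfl)
    rcases path4_cases hab with ⟨rfl,rfl⟩|⟨rfl,rfl⟩|⟨rfl,rfl⟩|⟨rfl,rfl⟩|⟨rfl,rfl⟩|⟨rfl,rfl⟩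
    exacts [⟨_, hm, (j,1), by simp [mem_f12], by simp⟩,
      ⟨_, hm, (j,1), by simp [mem_f12], by simp⟩,
      ⟨_, hm, (j,1), by simp [mem_f12], by simp⟩,
      ⟨_, hm, (j,1), by simp [mem_f12], by simp⟩,
      ⟨_, hm, (j,2), by simp [mem_f12], by simp⟩,
      ⟨_, hm, (j,2), by simp [mem_f12], by simp⟩]
  · have h1 : f01 j ∈ Mmix i := mem_Mmix.mpr (Or.inl ⟨j, hji, Or.inl rfl⟩)
    have h2 : f23 j ∈ Mmix i := mem_Mmix.mpr (Or.inl ⟨j, hji, Or.inr rfl⟩)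
    rcases path4_cases hab with ⟨rfl,rfl⟩|⟨rfl,rfl⟩|⟨rfl,rfl⟩|⟨rfl,rfl⟩|⟨rfl,rfl⟩|⟨rfl,rfl⟩
    exacts [⟨_, h1, (j,0), by simp [mem_f01], by simp⟩,
      ⟨_, h1, (j,0), by simp [mem_f01], by simp⟩,
      ⟨_, h1, (j,1), by simp [mem_f01], by simp⟩,
      ⟨_, h1, (j,1), by simp [mem_f01], by simp⟩,
      ⟨_, h2, (j,2), by simp [mem_f23], by simp⟩,
      ⟨_, h2, (j,2), by simp [mem_f23], by simp⟩]

lemma disj_01_23 : Disjoint (univ.image (f01 (k := k))) (univ.image f23) := by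
  rw [Finset.disjoint_left]
  rintro e he1 he2
  simp only [mem_image, mem_univ, true_and] at he1 he2
  obtain ⟨i, rfl⟩ := he1
  obtain ⟨j, hj⟩ := he2
  exact f01_ne_f23 hj.symm

lemma card_Mfull : (Mfull k).card = 2 * k := by
  rw [Mfull, card_union_of_disjoint disj_01_23,
    Finset.card_image_of_injective _ f01_inj,
    Finset.card_image_of_injective _ f23_inj]
  simp; ring

lemma card_Mmid : (Mmid k).card = k := by
  rw [Mmid, Finset.card_image_of_injective _ f12_inj]; simp

lemma card_Mmix {i : Fin k} : (Mmix i).card = 2 * k - 1 := by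
  have hk : 0 < k := i.pos
  have hd1 : Disjoint ((univ.erase i).image (f01 (k := k))) ((univ.erase i).image f23) := by
    rw [Finset.disjoint_left]
    rintro e he1 he2
    simp only [mem_image] at he1 he2
    obtain ⟨a, -, rfl⟩ := he1
    obtain ⟨b, -, hb⟩ := he2
    exact f01_ne_f23 hb.symm
  have hd2 : Disjoint ((univ.erase i).image (f01 (k := k)) ∪ (univ.erase i).image f23) {f12 i} := by
    rw [Finset.disjoint_right]
    rintro e he1 he2
    simp only [mem_singleton] at he1
    subst he1
    simp only [mem_union, mem_image] at he2
    rcases he2 with ⟨a, -, ha⟩ | ⟨a, -, ha⟩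
    · exact f12_ne_f01 ha.symm
    · exact f12_ne_f23 ha.symm
  rw [Mmix, card_union_of_disjoint hd2, card_union_of_disjoint hd1,
    Finset.card_image_of_injective _ f01_inj,
    Finset.card_image_of_injective _ f23_inj, card_singleton]
  simp [Finset.card_erase_of_mem]
  omega

lemma matching_card_le {M : Finset (Sym2 (Fin k × Fin 4))}
    (hM : IsMatchingIn (kP4 k) M) : M.card ≤ 2 * k := by
  classical
  have hcard : ∀ e ∈ M, (univ.filter (· ∈ e)).card = 2 := by
    intro e he
    have hedge := hM.1 e he
    obtain ⟨j, a, b, hab, rfl⟩ := edge_decomp hedge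
    have hne : ((j,a) : Fin k × Fin 4) ≠ (j,b) := by
      intro hcon
      rw [pathGraph_adj] at hab
      simp only [Prod.mk.injEq, Fin.ext_iff] at hcon
      omega
    have : (univ.filter (· ∈ s(((j,a) : Fin k × Fin 4),(j,b)))) = {(j,a),(j,b)} := by
      ext v; simp [Sym2.mem_iff]
    rw [this, card_insert_of_notMem (by simpa using hne), card_singleton]
  have hdisj : ∀ e ∈ M, ∀ f ∈ M, e ≠ f →
      Disjoint (univ.filter (· ∈ e)) (univ.filter (· ∈ f)) := by
    intro e he f hf hne
    rw [Finset.disjoint_left]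
    intro v hv hv'
    simp only [mem_filter] at hv hv'
    exact hM.2 e he f hf hne v hv.2 hv'.2
  have h1 : (M.biUnion fun e => univ.filter (· ∈ e)).card = ∑ e ∈ M, (univ.filter (· ∈ e)).card :=
    Finset.card_biUnion (fun e he f hf hne => hdisj e he f hf hne)
  have h2 : ∑ e ∈ M, (univ.filter (· ∈ e)).card = 2 * M.card := by
    rw [Finset.sum_congr rfl hcard]
    simp [mul_comm]
  have h3 : (M.biUnion fun e => univ.filter (· ∈ e)).card ≤ Fintype.card (Fin k × Fin 4) :=
    Finset.card_le_card (Finset.subset_univ _) |>.trans_eq (by simp)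
  simp only [Fintype.card_prod, Fintype.card_fin] at h3
  omega

lemma maximal_card_ge {M : Finset (Sym2 (Fin k × Fin 4))}
    (hM : IsMaximalMatchingIn (kP4 k) M) : k ≤ M.card := by
  classical
  have hex : ∀ i : Fin k, ∃ e ∈ M, ∃ c : Fin 4, ((i,c) : Fin k × Fin 4) ∈ e := by
    intro i
    by_contra hcon
    push_neg at hcon
    have h01 : f01 i ∉ M := fun h => hcon _ h 0 (by simp [mem_f01])
    have hins : IsMatchingIn (kP4 k) (insert (f01 i) M) := by
      constructor
      · intro e he
        rcases Finset.mem_insert.mp he with rfl | he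
        · exact kadj rfl (by omega)
        · exact hM.1.1 e he
      · intro e he f hf hne v hv hv'
        rcases Finset.mem_insert.mp he with rfl | he <;>
          rcases Finset.mem_insert.mp hf with rfl | hf
        · exact absurd rfl hne
        · rcases mem_f01.mp hv with rfl | rfl
          · exact hcon f hf 0 hv'
          · exact hcon f hf 1 hv'
        · rcases mem_f01.mp hv' with rfl | rfl
          · exact hcon e he 0 hv
          · exact hcon e he 1 hv
        · exact hM.1.2 e he f hf hne v hv hv'
    have := hM.2 _ hins (Finset.subset_insert _ _)
    exact h01 (this ▸ Finset.mem_insert_self _ _)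
  choose g hgM c hgc using hex
  have hinj : Set.InjOn g ↑(univ : Finset (Fin k)) := by
    intro i _ j _ hij
    have h1 := hgc i
    have h2 := hgc j
    rw [hij] at h1
    have := comp_eq (hM.1.1 _ (hgM j)) _ h1 _ h2
    exact this
  calc k = (univ : Finset (Fin k)).card := by simp
    _ ≤ M.card := Finset.card_le_card_of_injOn g (fun i _ => hgM i) hinj

lemma adj_from0 {d : Fin 4} (h : (pathGraph 4).Adj 0 d) : d = 1 := by
  rw [pathGraph_adj] at h
  have := d.isLt
  simp only [Fin.ext_iff] at *
  omega

lemma adj_from2 {d : Fin 4} (h : (pathGraph 4).Adj 2 d) : d = 1 ∨ d = 3 := by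
  rw [pathGraph_adj] at h
  have := d.isLt
  simp only [Fin.ext_iff] at *
  omega

lemma adj_from3 {d : Fin 4} (h : (pathGraph 4).Adj 3 d) : d = 2 := by
  rw [pathGraph_adj] at h
  have := d.isLt
  simp only [Fin.ext_iff] at *
  omega


lemma eq_Mfull_of_covers {M : Finset (Sym2 (Fin k × Fin 4))}
    (hM : IsMaximalMatchingIn (kP4 k) M)
    (hcov : ∀ i : Fin k, Sat M ((i, 0) : Fin k × Fin 4)) : M = Mfull k := by
  classical
  have h01 : ∀ i : Fin k, f01 i ∈ M := by
    intro i
    obtain ⟨e, he, hve⟩ := hcov i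
    obtain ⟨d, hd, rfl⟩ := edge_struct (hM.1.1 e he) hve
    rwa [adj_from0 hd] at he
  have h23 : ∀ i : Fin k, f23 i ∈ M := by
    intro i
    by_contra hcon
    -- no edge of M touches (i,2) or (i,3)
    have hno : ∀ f ∈ M, ∀ v, v ∈ f23 i → v ∉ f := by
      intro f hf v hv hvf
      rcases mem_f23.mp hv with rfl | rfl
      · obtain ⟨d, hd, rfl⟩ := edge_struct (hM.1.1 f hf) hvf
        rcases adj_from2 hd with rfl | rfl
        · -- f = s((i,2),(i,1)) shares (i,1) with f01 i
          have hne : s(((i,2) : Fin k × Fin 4),(i,1)) ≠ f01 i := by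
            simp [f01, Sym2.eq_iff, Prod.ext_iff]
          exact hM.1.2 _ hf _ (h01 i) hne (i,1) (by simp) (by simp [mem_f01])
        · -- f = s((i,2),(i,3)) = f23 i
          exact hcon hf
      · obtain ⟨d, hd, rfl⟩ := edge_struct (hM.1.1 f hf) hvf
        rw [adj_from3 hd] at hf
        have heq : s(((i,3) : Fin k × Fin 4),(i,2)) = f23 i := Sym2.eq_swap
        exact hcon (heq ▸ hf)
    have hins : IsMatchingIn (kP4 k) (insert (f23 i) M) := by
      constructor
      · intro e he
        rcases Finset.mem_insert.mp he with rfl | he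
        · exact kadj rfl (by omega)
        · exact hM.1.1 e he
      · intro e he f hf hne v hv hv'
        rcases Finset.mem_insert.mp he with rfl | he <;>
          rcases Finset.mem_insert.mp hf with rfl | hf
        · exact absurd rfl hne
        · exact hno f hf v hv hv'
        · exact hno e he v hv' hv
        · exact hM.1.2 e he f hf hne v hv hv'
    have := hM.2 _ hins (Finset.subset_insert _ _)
    exact hcon (this ▸ Finset.mem_insert_self _ _)
  have hsub : Mfull k ⊆ M := by
    intro e he
    rcases mem_Mfull.mp he with ⟨i, rfl | rfl⟩
    · exact h01 i
    · exact h23 i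
  exact maximal_Mfull.2 M hM.1 hsub

lemma Mfull_covers (v : Fin k × Fin 4) : Sat (Mfull k) v := by
  obtain ⟨j, a⟩ := v
  have h1 : f01 j ∈ Mfull k := mem_Mfull.mpr ⟨j, Or.inl rfl⟩
  have h2 : f23 j ∈ Mfull k := mem_Mfull.mpr ⟨j, Or.inr rfl⟩
  fin_cases a
  exacts [⟨_, h1, by simp [mem_f01]⟩, ⟨_, h1, by simp [mem_f01]⟩,
    ⟨_, h2, by simp [mem_f23]⟩, ⟨_, h2, by simp [mem_f23]⟩]

lemma Mmix_covers {i j : Fin k} (hj : j ≠ i) (a : Fin 4) : Sat (Mmix i) ((j, a) : Fin k × Fin 4) := by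
  have h1 : f01 j ∈ Mmix i := mem_Mmix.mpr (Or.inl ⟨j, hj, Or.inl rfl⟩)
  have h2 : f23 j ∈ Mmix i := mem_Mmix.mpr (Or.inl ⟨j, hj, Or.inr rfl⟩)
  fin_cases a
  exacts [⟨_, h1, by simp [mem_f01]⟩, ⟨_, h1, by simp [mem_f01]⟩,
    ⟨_, h2, by simp [mem_f23]⟩, ⟨_, h2, by simp [mem_f23]⟩]

end KP4Helpers

theorem stmt_19 (k : ℕ) (hk : 0 < k) :
    nuNum (kP4 k) = 2 * k ∧ betaNum (kP4 k) = k ∧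
    muGap (kP4 k) = k ∧ etaDefect (kP4 k) = k := by
  classical
  have hnu : nuNum (kP4 k) = 2 * k := by
    apply le_antisymm
    · refine csSup_le ⟨2 * k, Mfull k, matching_Mfull, card_Mfull⟩ ?_
      rintro n ⟨M, hM, rfl⟩
      exact matching_card_le hM
    · exact le_csSup ⟨2 * k, by rintro n ⟨M, hM, rfl⟩; exact matching_card_le hM⟩
        ⟨Mfull k, matching_Mfull, card_Mfull⟩
  have hbeta : betaNum (kP4 k) = k := by
    apply le_antisymm
    · exact Nat.sInf_le ⟨Mmid k, maximal_Mmid, card_Mmid⟩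
    · obtain ⟨M, hM, hcard⟩ :=
        Nat.sInf_mem (⟨k, Mmid k, maximal_Mmid, card_Mmid⟩ :
          Set.Nonempty {n | ∃ M, IsMaximalMatchingIn (kP4 k) M ∧ M.card = n})
      rw [betaNum, ← hcard]
      exact maximal_card_ge hM
  have heta : etaDefect (kP4 k) = k := by
    have hS0 : EquiSet (kP4 k) (Set.range (fun i : Fin k => ((i, 0) : Fin k × Fin 4))) := by
      intro M M' hM hM' hc hc'
      have h1 : M = Mfull k := eq_Mfull_of_covers hM (fun i => hc _ ⟨i, rfl⟩)
      have h2 : M' = Mfull k := eq_Mfull_of_covers hM' (fun i => hc' _ ⟨i, rfl⟩)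
      rw [h1, h2]
    have hinj : Function.Injective (fun i : Fin k => ((i, 0) : Fin k × Fin 4)) :=
      fun i j h => (Prod.ext_iff.mp h).1
    have hncard : (Set.range (fun i : Fin k => ((i, 0) : Fin k × Fin 4))).ncard = k := by
      rw [← Set.image_univ, Set.ncard_image_of_injective _ hinj, Set.ncard_univ,
        Nat.card_eq_fintype_card, Fintype.card_fin]
    apply le_antisymm
    · exact Nat.sInf_le ⟨_, hS0, hncard⟩
    · obtain ⟨S, hS, hcard⟩ :=
        Nat.sInf_mem (⟨k, _, hS0, hncard⟩ :
          Set.Nonempty {n | ∃ S : Set (Fin k × Fin 4), EquiSet (kP4 k) S ∧ S.ncard = n})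
      rw [etaDefect, ← hcard]
      by_cases hall : ∀ i : Fin k, ∃ a : Fin 4, ((i, a) : Fin k × Fin 4) ∈ S
      · have hfin : S.Finite := Set.toFinite S
        have hsurj : Set.SurjOn Prod.fst (↑hfin.toFinset : Set (Fin k × Fin 4))
            (↑(Finset.univ : Finset (Fin k))) := by
          intro i _
          obtain ⟨a, ha⟩ := hall i
          exact ⟨(i, a), by simpa using ha, rfl⟩
        calc k = (Finset.univ : Finset (Fin k)).card := by simp
          _ ≤ hfin.toFinset.card := Finset.card_le_card_of_surjOn Prod.fst hsurj
          _ = S.ncard := (Set.ncard_eq_toFinset_card _ hfin).symm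
      · push_neg at hall
        obtain ⟨i, hi⟩ := hall
        exfalso
        have hcovmix : CoversSet (Mmix i) S := by
          rintro ⟨j, a⟩ hv
          have hj : j ≠ i := by
            rintro rfl
            exact hi a hv
          exact Mmix_covers hj a
        have := hS (Mfull k) (Mmix i) maximal_Mfull maximal_Mmix
          (fun v _ => Mfull_covers v) hcovmix
        rw [card_Mfull, card_Mmix] at this
        omega
  refine ⟨hnu, hbeta, ?_, heta⟩
  rw [muGap, hnu, hbeta]
  omega
end
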